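/- Let q ≥ 1 and let 0 → F^0 ⊗ O(−d) → F^1 ⊗ O(−d+1) → ⋯ → F^d ⊗ O → 0 be a complex of sheaves on P^{q-1}, where F^0, …, F^d are finite-dimensional complex vector spaces, which is exact at every position except possibly at position j (0 ≤ j ≤ d), and which is not the zero complex. If q > d then the complex is not exact at position j, i.e., its homology sheaf at position j is nonzero. -/

import Mathlib

/-!
STATEMENT 17.

Let `q ≥ 1` and let `0 → F^0 ⊗ O(−d) → F^1 ⊗ O(−d+1) → ⋯ → F^d ⊗ O → 0` be a
nonzero complex of sheaves on `P^{q-1}`, exact at every position except possibly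
at position `j ≤ d`.  If `q > d`, then the complex is not exact at position `j`.

The category of coherent sheaves on `P^{q-1}` is modeled by an abelian category
`C` with twisting objects `O : ℤ → C`, where `hO` is the standard
characterization of `Ext^i(O(x), O(y)) ≅ H^i(P^{q-1}, O(y-x))` on projective
`(q-1)`-space.  The complex is a `ℕ`-indexed cochain complex `K` whose `i`-th
term (for `i ≤ d`) is a biproduct of `m i = dim F^i` copies of `O(−d+i)`, with
vanishing terms in degrees `> d`; exactness at a position `i` is `K.ExactAt i`
(at `i = 0` this means the first map is mono, matching the initial `0 →`), and
the homology sheaf at `j` being nonzero is exactly the failure of `K.ExactAt j`.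
-/

open CategoryTheory CategoryTheory.Limits CategoryTheory.Abelian
attribute [local instance] CategoryTheory.Abelian.hasFiniteBiproducts

universe w v u

namespace Stmt17Aux

variable {C : Type u} [Category.{v} C] [Abelian C] [HasExt.{w} C]

lemma mk₀_add {X Y : C} (f g : X ⟶ Y) :
    Ext.mk₀ (f + g) = (Ext.mk₀ f + Ext.mk₀ g : Ext X Y 0) := by
  letI := HasDerivedCategory.standard C
  apply Ext.homAddEquiv.injective
  rw [map_add]
  simp only [Ext.homAddEquiv_apply, Ext.mk₀_hom, Functor.map_add]
  simp [ShiftedHom.mk₀, Preadditive.add_comp]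

/-- `Ext.mk₀` as an additive homomorphism. -/
noncomputable def mk₀Hom (X Y : C) : (X ⟶ Y) →+ Ext X Y 0 :=
  AddMonoidHom.mk' Ext.mk₀ mk₀_add

lemma subsingleton_ext_of_isZero (X : C) {Y : C} (hY : IsZero Y) (n : ℕ) :
    Subsingleton (Ext X Y n) := by
  suffices h : ∀ α : Ext X Y n, α = 0 from ⟨fun a b => by rw [h a, h b]⟩
  intro α
  have h1 : (𝟙 Y) = (0 : Y ⟶ Y) := hY.eq_of_src _ _
  rw [← Ext.comp_mk₀_id α, h1, Ext.mk₀_zero, Ext.comp_zero]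

lemma subsingleton_ext_biproduct {J : Type} [Fintype J] (f : J → C) [HasBiproduct f]
    (X : C) (n : ℕ) (h : ∀ j, Subsingleton (Ext X (f j) n)) :
    Subsingleton (Ext X (⨁ f) n) := by
  suffices h0 : ∀ α : Ext X (⨁ f) n, α = 0 from ⟨fun a b => by rw [h0 a, h0 b]⟩
  intro α
  have h1 : Ext.mk₀ (∑ j : J, biproduct.π f j ≫ biproduct.ι f j)
      = ∑ j : J, Ext.mk₀ (biproduct.π f j ≫ biproduct.ι f j) :=
    map_sum (mk₀Hom _ _) _ _
  have h2 : α.comp (∑ j : J, Ext.mk₀ (biproduct.π f j ≫ biproduct.ι f j)) (add_zero n)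
      = ∑ j : J, α.comp (Ext.mk₀ (biproduct.π f j ≫ biproduct.ι f j)) (add_zero n) :=
    map_sum ((Ext.bilinearComp X (⨁ f) (⨁ f) n 0 n (add_zero n)) α) _ _
  calc α = α.comp (Ext.mk₀ (𝟙 (⨁ f))) (add_zero n) := (Ext.comp_mk₀_id α).symm
    _ = α.comp (Ext.mk₀ (∑ j : J, biproduct.π f j ≫ biproduct.ι f j)) (add_zero n) := by
        rw [biproduct.total]
    _ = ∑ j : J, α.comp (Ext.mk₀ (biproduct.π f j ≫ biproduct.ι f j)) (add_zero n) := by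
        rw [h1, h2]
    _ = 0 := by
        apply Finset.sum_eq_zero
        intro j _
        rw [← Ext.mk₀_comp_mk₀, ← Ext.comp_assoc_of_third_deg_zero α _ _ (add_zero n),
          @Subsingleton.elim _ (h j) (α.comp (Ext.mk₀ (biproduct.π f j)) (add_zero n)) 0,
          Ext.zero_comp]

lemma isZero_biproduct_of_isEmpty {J : Type} [Fintype J] [IsEmpty J] (f : J → C)
    [HasBiproduct f] : IsZero (⨁ f) := by
  rw [IsZero.iff_id_eq_zero, ← biproduct.total]
  simp

end Stmt17Aux

open Stmt17Aux

theorem stmt17 {C : Type u} [Category.{v} C] [Abelian C] [HasExt.{w} C]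
    (q d j : ℕ) (hq : 1 ≤ q) (hj : j ≤ d) (hqd : d < q)
    (O : ℤ → C)
    (hO : ∀ (x y : ℤ) (i : ℕ),
      Nontrivial (Ext (O x) (O y) i) ↔ (i = 0 ∧ x ≤ y) ∨ (i = q - 1 ∧ y + (q : ℤ) ≤ x))
    (m : ℕ → ℕ)
    (K : CochainComplex C ℕ)
    (hK : ∀ i, i ≤ d → K.X i = ⨁ (fun _ : Fin (m i) => O (-(d : ℤ) + (i : ℤ))))
    (hK0 : ∀ i, d < i → IsZero (K.X i))
    (hnz : ¬ ∀ i, IsZero (K.X i))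
    (hex : ∀ i, i ≠ j → K.ExactAt i) :
    ¬ K.ExactAt j := by
  intro hexj
  classical
  have hexall : ∀ i, K.ExactAt i := fun i => by
    by_cases h : i = j
    · subst h; exact hexj
    · exact hex i h
  -- find the largest index with a nonzero term
  obtain ⟨t, ht⟩ := not_forall.mp hnz
  have htd : t ≤ d := by
    by_contra h
    exact ht (hK0 t (not_le.mp h))
  set P : ℕ → Prop := fun i => ¬ IsZero (K.X i) with hPdef
  set i1 := Nat.findGreatest P d with hi1def
  have hP1 : P i1 := Nat.findGreatest_spec htd ht
  have hi1d : i1 ≤ d := Nat.findGreatest_le d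
  have hzgt : ∀ i, i1 < i → IsZero (K.X i) := by
    intro i hi
    by_cases hid : i ≤ d
    · by_contra h
      exact Nat.findGreatest_is_greatest hi hid h
    · exact hK0 i (not_le.mp hid)
  set X := O (-(d : ℤ) + (i1 : ℤ)) with hXdef
  -- triviality of all Ext groups from X into the terms below position i1
  have hXtriv : ∀ (i k : ℕ), i < i1 → Subsingleton (Ext.{w} X (K.X i) k) := by
    intro i k hi
    have hid : i ≤ d := le_trans (le_of_lt hi) hi1d
    rw [hK i hid]
    refine subsingleton_ext_biproduct _ _ _ (fun _ => ?_)
    rw [← not_nontrivial_iff_subsingleton, hO]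
    rintro (⟨hk0, hle⟩ | ⟨hk, hle⟩)
    · omega
    · omega
  -- all Ext groups from X into the cycles up to position i1 are trivial
  have hcycles : ∀ i : ℕ, i ≤ i1 → ∀ k, Subsingleton (Ext.{w} X (K.cycles i) k) := by
    intro i
    induction i with
    | zero =>
      intro _ k
      have hex0 := (K.exactAt_iff_isZero_homology 0).mp (hexall 0)
      have hepi : Epi (K.toCycles 0 0) :=
        Preadditive.epi_of_isZero_cokernel' _ (K.homologyIsCokernel 0 0 CochainComplex.prev_nat_zero) hex0
      have h0 : K.toCycles 0 0 = 0 := K.toCycles_eq_zero (by simp [ComplexShape.up_Rel])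
      have hz : IsZero (K.cycles 0) := by
        rw [IsZero.iff_id_eq_zero, ← cancel_epi (K.toCycles 0 0), h0]
        simp
      exact subsingleton_ext_of_isZero X hz k
    | succ n ih =>
      intro hn k
      have hnlt : n < i1 := hn
      -- the short exact sequence 0 → cycles n → X n → cycles (n+1) → 0
      have hw : K.iCycles n ≫ K.toCycles n (n + 1) = 0 := by
        rw [← cancel_mono (K.iCycles (n + 1))]
        simp
      have hepi : Epi (K.toCycles n (n + 1)) := by
        have hexn := (K.exactAt_iff_isZero_homology (n + 1)).mp (hexall (n + 1))
        exact Preadditive.epi_of_isZero_cokernel' _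
          (K.homologyIsCokernel n (n + 1) (CochainComplex.prev_nat_succ n)) hexn
      have hSe : (ShortComplex.mk (K.iCycles n) (K.toCycles n (n + 1)) hw).Exact := by
        apply ShortComplex.exact_of_f_is_kernel
        refine KernelFork.IsLimit.ofι _ _
          (fun {W} g' hg' => K.liftCycles g' (n + 1) (CochainComplex.next ℕ n)
            (by rw [← K.toCycles_i n (n + 1), ← Category.assoc, hg', Limits.zero_comp]))
          (fun {W} g' hg' => by simp)
          (fun {W} g' hg' b hb => by
            rw [← cancel_mono (K.iCycles n)]
            simp [hb])
      have hSse : (ShortComplex.mk (K.iCycles n) (K.toCycles n (n + 1)) hw).ShortExact :=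
        ShortComplex.ShortExact.mk' hSe inferInstance hepi
      suffices h0 : ∀ γ : Ext.{w} X (K.cycles (n + 1)) k, γ = 0 from
        ⟨fun a b => by rw [h0 a, h0 b]⟩
      intro γ
      have hδ : γ.comp hSse.extClass rfl = 0 :=
        @Subsingleton.elim _ (ih (le_of_lt hnlt) (k + 1)) _ _
      obtain ⟨x₂, hx₂⟩ := Ext.covariant_sequence_exact₃ X hSse γ rfl hδ
      have hx₂0 : x₂ = 0 := @Subsingleton.elim _ (hXtriv n k hnlt) _ _
      rw [← hx₂, hx₂0, Ext.zero_comp]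
  -- cycles i1 ≅ K.X i1 since the differential out of i1 vanishes
  have hd0 : K.d i1 (i1 + 1) = 0 := (hzgt (i1 + 1) (Nat.lt_succ_self i1)).eq_of_tgt _ _
  have hii : IsIso (K.iCycles i1) := K.isIso_iCycles i1 (i1 + 1) (CochainComplex.next ℕ i1) hd0
  have hsub0 : Subsingleton (Ext.{w} X (K.X i1) 0) := by
    suffices h0 : ∀ α : Ext.{w} X (K.X i1) 0, α = 0 from ⟨fun a b => by rw [h0 a, h0 b]⟩
    intro α
    have hα : α = (α.comp (Ext.mk₀ (inv (K.iCycles i1))) (add_zero 0)).comp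
        (Ext.mk₀ (K.iCycles i1)) (add_zero 0) := by
      rw [Ext.comp_assoc_of_third_deg_zero, Ext.mk₀_comp_mk₀, IsIso.inv_hom_id,
        Ext.comp_mk₀_id]
    rw [hα, @Subsingleton.elim _ (hcycles i1 le_rfl 0)
      (α.comp (Ext.mk₀ (inv (K.iCycles i1))) (add_zero 0)) 0, Ext.zero_comp]
  -- the top term is a nonzero biproduct of copies of X
  have hm1 : m i1 ≠ 0 := by
    intro h
    apply hP1
    rw [hK i1 hi1d]
    haveI : IsEmpty (Fin (m i1)) := ⟨fun x => absurd x.2 (by omega)⟩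
    exact isZero_biproduct_of_isEmpty _
  have hnt : Nontrivial (Ext.{w} X X 0) := (hO _ _ 0).mpr (Or.inl ⟨rfl, le_refl _⟩)
  obtain ⟨γ, hγ⟩ := exists_ne (0 : Ext.{w} X X 0)
  let j0 : Fin (m i1) := ⟨0, Nat.pos_of_ne_zero hm1⟩
  let ι : X ⟶ K.X i1 :=
    biproduct.ι (fun _ : Fin (m i1) => O (-(d : ℤ) + (i1 : ℤ))) j0 ≫ eqToHom (hK i1 hi1d).symm
  let π : K.X i1 ⟶ X :=
    eqToHom (hK i1 hi1d) ≫ biproduct.π (fun _ : Fin (m i1) => O (-(d : ℤ) + (i1 : ℤ))) j0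
  have hιπ : ι ≫ π = 𝟙 X := by
    simp [ι, π]
    rfl
  have hι0 : Ext.mk₀ ι = 0 := @Subsingleton.elim _ hsub0 _ _
  have hid0 : Ext.mk₀ (𝟙 X) = (0 : Ext.{w} X X 0) := by
    rw [← hιπ, ← Ext.mk₀_comp_mk₀, hι0, Ext.zero_comp]
  exact hγ (by rw [← Ext.mk₀_id_comp γ, hid0, Ext.zero_comp])
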